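/- Let ℓ: [0,1] × {0,1} → [−1,1] be a loss of bounded variation (ℓ ∈ L_BV). If a predictor p*: X → [0,1] is (G,H,ε)-multiaccurate, then for every h ∈ H and every group g ∈ G: |E_{(x,y)~D}[(y − p*(x))·Δℓ(h(x)) | g(x)=1]| ≤ 10ε·√(1/P_g) (Hypothesis Outcome Indistinguishability). -/

import Mathlib

open MeasureTheory ProbabilityTheory Set Filter

noncomputable section

/-- partition sums from 0 to c -/
def PS (f : ℝ → ℝ) (c : ℝ) : Set ℝ :=
  {S | ∃ (m : ℕ) (z : ℕ → ℝ), z 0 = 0 ∧ z m = c ∧ (∀ i < m, z i < z (i + 1)) ∧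
      S = ∑ i ∈ Finset.range m, |f (z (i + 1)) - f (z i)|}

def clampI (t : ℝ) : ℝ := max 0 (min 1 t)

def Vf (f : ℝ → ℝ) (t : ℝ) : ℝ := sSup (PS f (clampI t))

lemma clampI_mem (t : ℝ) : clampI t ∈ Icc (0:ℝ) 1 := by
  constructor
  · exact le_max_left _ _
  · exact max_le (by norm_num) (min_le_left _ _)

lemma clampI_mono : Monotone clampI := by
  intro s t hst
  exact max_le_max le_rfl (min_le_min le_rfl hst)

lemma clampI_eq {t : ℝ} (ht : t ∈ Icc (0:ℝ) 1) : clampI t = t := by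
  unfold clampI
  rw [min_eq_right ht.2, max_eq_right ht.1]

lemma zmono_of_strict {z : ℕ → ℝ} {m : ℕ} (hs : ∀ i < m, z i < z (i + 1)) :
    ∀ i j, i ≤ j → j ≤ m → z i ≤ z j := by
  intro i j hij hjm
  induction j with
  | zero => interval_cases i; exact le_rfl
  | succ n ih =>
    rcases Nat.eq_or_lt_of_le hij with h | h
    · exact h ▸ le_rfl
    · have h1 : i ≤ n := Nat.lt_succ_iff.mp h
      have h2 : n < m := Nat.lt_of_succ_le hjm
      exact (ih h1 h2.le).trans (hs n h2).le

lemma PS_nonempty (f : ℝ → ℝ) {c : ℝ} (hc : c ∈ Icc (0:ℝ) 1) : (PS f c).Nonempty := by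
  rcases eq_or_lt_of_le hc.1 with h | h
  · exact ⟨0, 0, fun _ => 0, rfl, h, fun i hi => absurd hi (Nat.not_lt_zero i), by simp⟩
  · refine ⟨|f c - f 0|, 1, fun i => if i = 0 then 0 else c, by simp, by simp, ?_, by simp⟩
    intro i hi
    interval_cases i
    simpa using h

lemma PS_append (f : ℝ → ℝ) {m : ℕ} {z : ℕ → ℝ} {a b : ℝ}
    (h0 : z 0 = 0) (hm : z m = a) (hs : ∀ i < m, z i < z (i + 1)) (hab : a < b) :
    (∑ i ∈ Finset.range m, |f (z (i + 1)) - f (z i)|) + |f b - f a| ∈ PS f b := by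
  refine ⟨m + 1, fun i => if i ≤ m then z i else b, by simp [h0], by simp, ?_, ?_⟩
  · intro i hi
    by_cases h : i < m
    · show (if i ≤ m then z i else b) < (if i + 1 ≤ m then z (i + 1) else b)
      rw [if_pos h.le, if_pos (Nat.succ_le_of_lt h)]
      exact hs i h
    · have him : i = m := by omega
      subst him
      show (if i ≤ i then z i else b) < (if i + 1 ≤ i then z (i + 1) else b)
      rw [if_pos le_rfl, if_neg (by omega), hm]
      exact hab
  · rw [Finset.sum_range_succ]
    congr 1
    · refine Finset.sum_congr rfl fun i hi => ?_
      have him : i < m := Finset.mem_range.mp hi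
      show |f (z (i + 1)) - f (z i)| =
        |f (if i + 1 ≤ m then z (i + 1) else b) - f (if i ≤ m then z i else b)|
      rw [if_pos (Nat.succ_le_of_lt him), if_pos him.le]
    · show |f b - f a| =
        |f (if m + 1 ≤ m then z (m + 1) else b) - f (if m ≤ m then z m else b)|
      rw [if_pos le_rfl, if_neg (by omega), hm]

section WithBound

variable {f : ℝ → ℝ} (hV2 : ∀ S ∈ PS f 1, S ≤ 2)
include hV2

lemma PS_le_two {c : ℝ} (hc : c ∈ Icc (0:ℝ) 1) : ∀ S ∈ PS f c, S ≤ 2 := by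
  rintro S ⟨m, z, h0, hm, hs, rfl⟩
  rcases eq_or_lt_of_le hc.2 with h | h
  · exact hV2 _ ⟨m, z, h0, h ▸ hm, hs, rfl⟩
  · have := hV2 _ (PS_append f h0 hm hs h)
    have hnn : (0:ℝ) ≤ |f 1 - f c| := abs_nonneg _
    linarith

lemma PS_bddAbove {c : ℝ} (hc : c ∈ Icc (0:ℝ) 1) : BddAbove (PS f c) :=
  ⟨2, fun _ hS => PS_le_two hV2 hc _ hS⟩

lemma Vf_mono : Monotone (Vf f) := by
  intro s t hst
  have hcs := clampI_mem s
  have hct := clampI_mem t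
  have hle : clampI s ≤ clampI t := clampI_mono hst
  refine csSup_le (PS_nonempty f hcs) fun S hS => ?_
  rcases eq_or_lt_of_le hle with h | h
  · exact le_csSup (PS_bddAbove hV2 hct) (h ▸ hS)
  · obtain ⟨m, z, h0, hm, hsz, rfl⟩ := hS
    have hmem := PS_append f h0 hm hsz h
    have h2 := le_csSup (PS_bddAbove hV2 hct) hmem
    have hnn : (0:ℝ) ≤ |f (clampI t) - f (clampI s)| := abs_nonneg _
    unfold Vf
    linarith

lemma Vf_key {s t : ℝ} (h0 : 0 ≤ s) (hst : s ≤ t) (ht : t ≤ 1) :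
    |f t - f s| ≤ Vf f t - Vf f s := by
  have hsI : s ∈ Icc (0:ℝ) 1 := ⟨h0, hst.trans ht⟩
  have htI : t ∈ Icc (0:ℝ) 1 := ⟨h0.trans hst, ht⟩
  rcases eq_or_lt_of_le hst with h | h
  · subst h
    simpa using sub_nonneg.mpr (le_refl (Vf f s))
  · have hcs : clampI s = s := clampI_eq hsI
    have hct : clampI t = t := clampI_eq htI
    have key : ∀ S ∈ PS f (clampI s), S + |f t - f s| ≤ Vf f t := by
      intro S hS
      rw [hcs] at hS
      obtain ⟨m, z, hz0, hzm, hzs, rfl⟩ := hS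
      have hmem := PS_append f hz0 hzm hzs h
      show _ ≤ sSup (PS f (clampI t))
      rw [hct]
      exact le_csSup (PS_bddAbove hV2 htI) hmem
    have h2 : Vf f s ≤ Vf f t - |f t - f s| :=
      csSup_le (PS_nonempty f (clampI_mem s)) (fun S hS => by linarith [key S hS])
    linarith

lemma f_right_lim {a : ℝ} (ha : a ∈ Icc (0:ℝ) 1) (hca : ContinuousAt (Vf f) a)
    {t : ℕ → ℝ} (htm : ∀ n, t n ∈ Icc a 1) (htt : Tendsto t atTop (nhds a)) :
    Tendsto (fun n => f (t n)) atTop (nhds (f a)) := by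
  have h1 : ∀ n, |f (t n) - f a| ≤ Vf f (t n) - Vf f a := fun n =>
    Vf_key hV2 ha.1 (htm n).1 (htm n).2
  have h2 : Tendsto (fun n => Vf f (t n) - Vf f a) atTop (nhds 0) := by
    have := (hca.tendsto.comp htt).sub_const (Vf f a)
    simpa using this
  have h3 : Tendsto (fun n => |f (t n) - f a|) atTop (nhds 0) :=
    squeeze_zero (fun n => abs_nonneg _) h1 h2
  rw [tendsto_iff_dist_tendsto_zero]
  simpa [Real.dist_eq] using h3

end WithBound



lemma zmono_of_strict' {z : ℕ → ℝ} {m : ℕ} (hs : ∀ i < m, z i < z (i + 1)) :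
    ∀ i j, i ≤ j → j ≤ m → z i ≤ z j := by
  intro i j hij hjm
  induction j with
  | zero => interval_cases i; exact le_rfl
  | succ n ih =>
    rcases Nat.eq_or_lt_of_le hij with h | h
    · exact h ▸ le_rfl
    · have h1 : i ≤ n := Nat.lt_succ_iff.mp h
      have h2 : n < m := Nat.lt_of_succ_le hjm
      exact (ih h1 h2.le).trans (hs n h2).le

/-- Step-function representation associated to a finite partition set `P`. -/
lemma step_rep (f : ℝ → ℝ) (P : Finset ℝ) (hP0 : (0:ℝ) ∈ P) (hP1 : (1:ℝ) ∈ P)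
    (hPsub : ∀ x ∈ P, x ∈ Icc (0:ℝ) 1) :
    ∃ (m : ℕ) (z : ℕ → ℝ) (nxt : ℝ → ℝ),
      z 0 = 0 ∧ z m = 1 ∧ (∀ i < m, z i < z (i + 1)) ∧
      (∀ q, q ≤ 1 →
        (q ≤ nxt q ∧ nxt q ∈ Icc (0:ℝ) 1 ∧ (∀ w ∈ P, q ≤ w → nxt q ≤ w) ∧ (q ∈ P → nxt q = q) ∧
          f (nxt q) = f 1 - ∑ i ∈ Finset.range m,
            (f (z (i + 1)) - f (z i)) * (if q ≤ z i then 1 else 0))) := by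
  classical
  set l := P.sort (· ≤ ·) with hl
  have hlen : l.length = P.card := Finset.length_sort _
  have hlpos : 0 < l.length := by
    rw [hlen]
    exact Finset.card_pos.mpr ⟨0, hP0⟩
  set m := l.length - 1 with hm
  have hmlen : m + 1 = l.length := Nat.succ_pred_eq_of_pos hlpos
  set z : ℕ → ℝ := fun i => l.getD i 1 with hz
  -- basic facts about z
  have hzget : ∀ i (h : i < l.length), z i = l[i] := fun i h => List.getD_eq_getElem l 1 h
  have hmin : P.min' ⟨0, hP0⟩ = 0 := by
    refine le_antisymm (Finset.min'_le _ _ hP0) (Finset.le_min' _ _ _ fun y hy => (hPsub y hy).1)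
  have hmax : P.max' ⟨0, hP0⟩ = 1 := by
    refine le_antisymm (Finset.max'_le _ _ _ fun y hy => (hPsub y hy).2) (Finset.le_max' _ _ hP1)
  have hz0 : z 0 = 0 := by
    rw [hzget 0 hlpos]
    rw [Finset.sorted_zero_eq_min' (h := hlpos)]
    exact hmin
  have hlt : ∀ i, i ≤ m → i < l.length := fun i hi => by
    rw [← hmlen]; exact Nat.lt_succ_of_le hi
  have hzm : z m = 1 := by
    rw [hzget m (hlt m le_rfl)]
    exact (Finset.sorted_last_eq_max' (h := by rw [← hmlen]; omega)).trans hmax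
  have hstrict : ∀ i < m, z i < z (i + 1) := by
    intro i hi
    rw [hzget i (hlt i hi.le), hzget (i+1) (hlt (i+1) hi)]
    exact List.pairwise_iff_getElem.mp (Finset.sortedLT_sort P).pairwise i (i+1) (hlt i hi.le)
      (hlt (i+1) hi) (by omega)
  have hzmem : ∀ i, i ≤ m → z i ∈ P := by
    intro i hi
    rw [hzget i (hlt i hi)]
    exact (Finset.mem_sort _).mp (List.getElem_mem _)
  have hzsurj : ∀ w ∈ P, ∃ i, i ≤ m ∧ z i = w := by
    intro w hw
    have : w ∈ l := (Finset.mem_sort _).mpr hw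
    obtain ⟨i, hi, hiw⟩ := List.mem_iff_getElem.mp this
    exact ⟨i, by rw [← hmlen] at hi; omega, by rw [hzget i hi]; exact hiw⟩
  have hzmono : ∀ i j, i ≤ j → j ≤ m → z i ≤ z j := zmono_of_strict' hstrict
  -- the "next point" function
  have hex : ∀ q : ℝ, q ≤ 1 → ∃ i, i ≤ m ∧ q ≤ z i := fun q hq => ⟨m, le_rfl, hzm ▸ hq⟩
  set nxt : ℝ → ℝ := fun q => if hq : q ≤ 1 then z (Nat.find (hex q hq)) else 1 with hnxt
  refine ⟨m, z, nxt, hz0, hzm, hstrict, ?_⟩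
  intro q hq
  have hnq : nxt q = z (Nat.find (hex q hq)) := dif_pos hq
  rw [hnq]
  set k := Nat.find (hex q hq) with hk
  obtain ⟨hkm, hqk⟩ : k ≤ m ∧ q ≤ z k := Nat.find_spec (hex q hq)
  have hmin' : ∀ j, j ≤ m → q ≤ z j → k ≤ j := fun j h1 h2 => Nat.find_le ⟨h1, h2⟩
  refine ⟨hqk, hPsub _ (hzmem k hkm), ?_, ?_, ?_⟩
  · -- minimality among members of P that are ≥ q
    intro w hw hqw
    obtain ⟨j, hjm, rfl⟩ := hzsurj w hw
    exact hzmono k j (hmin' j hjm hqw) hjm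
  · -- exactness when q ∈ P
    intro hqP
    obtain ⟨j, hjm, hjq⟩ := hzsurj q hqP
    have : k ≤ j := hmin' j hjm (le_of_eq hjq.symm)
    exact le_antisymm (hjq ▸ hzmono k j this hjm) hqk
  · -- the key identity
    have hiff : ∀ i ∈ Finset.range m, ((if q ≤ z i then (1:ℝ) else 0) = if k ≤ i then 1 else 0) := by
      intro i hi
      have him : i < m := Finset.mem_range.mp hi
      by_cases h : q ≤ z i
      · rw [if_pos h, if_pos (hmin' i him.le h)]
      · rw [if_neg h, if_neg (fun hki => h (hqk.trans (hzmono k i hki him.le)))]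
    calc f (z k) = f 1 - (f (z m) - f (z k)) := by rw [hzm]; ring
    _ = f 1 - ∑ i ∈ Finset.Ico k m, (f (z (i + 1)) - f (z i)) := by
        rw [Finset.sum_Ico_eq_sub _ hkm, Finset.sum_range_sub (fun i => f (z i)),
          Finset.sum_range_sub (fun i => f (z i))]
        ring
    _ = f 1 - ∑ i ∈ Finset.range m, (f (z (i + 1)) - f (z i)) * (if k ≤ i then 1 else 0) := by
        congr 1
        symm
        calc ∑ i ∈ Finset.range m, (f (z (i + 1)) - f (z i)) * (if k ≤ i then 1 else 0)
            = ∑ i ∈ Finset.range m, (if k ≤ i then f (z (i + 1)) - f (z i) else 0) :=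
              Finset.sum_congr rfl fun i _ => by rw [mul_ite, mul_one, mul_zero]
          _ = ∑ i ∈ (Finset.range m).filter (fun i => k ≤ i), (f (z (i + 1)) - f (z i)) :=
              (Finset.sum_filter _ _).symm
          _ = ∑ i ∈ Finset.Ico k m, (f (z (i + 1)) - f (z i)) := by
              congr 1
              ext i
              simp only [Finset.mem_filter, Finset.mem_range, Finset.mem_Ico]
              tauto
    _ = f 1 - ∑ i ∈ Finset.range m, (f (z (i + 1)) - f (z i)) * (if q ≤ z i then 1 else 0) := by
        congr 1
        exact (Finset.sum_congr rfl fun i hi => by rw [hiff i hi]).symm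


open Filter in
lemma key_lemma {Ω : Type*} [MeasurableSpace Ω] (μ : MeasureTheory.Measure Ω)
    [MeasureTheory.IsProbabilityMeasure μ]
    (f : ℝ → ℝ) (hfm : Measurable f) (hfb : ∀ r ∈ Icc (0:ℝ) 1, |f r| ≤ 2)
    (hV2 : ∀ S ∈ PS f 1, S ≤ 2)
    (u : Ω → ℝ) (hu : Measurable u) (hub : ∀ ω, |u ω| ≤ 1)
    (q : Ω → ℝ) (hq : Measurable q) (hqr : ∀ ω, q ω ∈ Icc (0:ℝ) 1)
    (c : ℝ) (hc : 0 ≤ c)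
    (hT : ∀ w ∈ Icc (0:ℝ) 1, |∫ ω, u ω * (if q ω ≤ w then 1 else 0) ∂μ| ≤ c) :
    |∫ ω, u ω * f (q ω) ∂μ| ≤ 4 * c := by
  classical
  -- countable set of discontinuities of the variation function
  have hCc : Set.Countable {x | ¬ContinuousAt (Vf f) x} :=
    (Vf_mono hV2).countable_not_continuousAt
  set C : Set ℝ := insert 0 ({x | ¬ContinuousAt (Vf f) x} ∩ Icc (0:ℝ) 1) with hC
  have hCcount : C.Countable := (hCc.mono inter_subset_left).insert 0
  obtain ⟨e, he⟩ := hCcount.exists_eq_range ⟨0, mem_insert 0 _⟩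
  have heI : ∀ n, e n ∈ Icc (0:ℝ) 1 := by
    intro n
    have : e n ∈ C := he ▸ mem_range_self n
    rcases this with h | h
    · rw [h]; exact ⟨le_rfl, zero_le_one⟩
    · exact h.2
  -- the partitions
  set P : ℕ → Finset ℝ := fun n =>
    (Finset.range (2 ^ n + 1)).image (fun k : ℕ => (k : ℝ) / 2 ^ n) ∪ (Finset.range n).image e
    with hP
  have hpow : ∀ n : ℕ, (0:ℝ) < 2 ^ n := fun n => by positivity
  have hP0 : ∀ n, (0:ℝ) ∈ P n := by
    intro n
    refine Finset.mem_union_left _ (Finset.mem_image.mpr ⟨0, ?_, by simp⟩)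
    simp
  have hP1 : ∀ n, (1:ℝ) ∈ P n := by
    intro n
    refine Finset.mem_union_left _ (Finset.mem_image.mpr ⟨2 ^ n, ?_, ?_⟩)
    · simp
    · push_cast; field_simp
  have hPsub : ∀ n, ∀ x ∈ P n, x ∈ Icc (0:ℝ) 1 := by
    intro n x hx
    rcases Finset.mem_union.mp hx with h | h
    · obtain ⟨k, hk, rfl⟩ := Finset.mem_image.mp h
      have hk' : (k : ℝ) ≤ 2 ^ n := by
        have := Finset.mem_range.mp hk
        exact_mod_cast Nat.lt_succ_iff.mp this
      constructor
      · positivity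
      · rw [div_le_one (hpow n)]; exact hk'
    · obtain ⟨k, _, rfl⟩ := Finset.mem_image.mp h
      exact heI k
  have hgrid : ∀ n, ∀ a ∈ Icc (0:ℝ) 1, ∃ w ∈ P n, a ≤ w ∧ w ≤ a + 1 / 2 ^ n := by
    intro n a ha
    set b := ⌈a * 2 ^ n⌉₊ with hb
    have hb1 : b ≤ 2 ^ n := by
      rw [hb]
      have : a * 2 ^ n ≤ (2:ℝ) ^ n := by
        nlinarith [ha.2, hpow n]
      calc ⌈a * 2 ^ n⌉₊ ≤ ⌈(2:ℝ) ^ n⌉₊ := Nat.ceil_le_ceil this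
        _ = 2 ^ n := by
            rw [show ((2:ℝ) ^ n) = ((2 ^ n : ℕ) : ℝ) by push_cast; ring, Nat.ceil_natCast]
    refine ⟨(b : ℝ) / 2 ^ n, Finset.mem_union_left _
      (Finset.mem_image.mpr ⟨b, Finset.mem_range.mpr (Nat.lt_succ_of_le hb1), rfl⟩), ?_, ?_⟩
    · rw [le_div_iff₀ (hpow n)]
      exact Nat.le_ceil _
    · rw [div_le_iff₀ (hpow n)]
      have h1 : (b : ℝ) < a * 2 ^ n + 1 := Nat.ceil_lt_add_one (by nlinarith [ha.1, hpow n])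
      have h2 : (a + 1 / 2 ^ n) * 2 ^ n = a * 2 ^ n + 1 := by field_simp
      linarith
  -- step representations
  have hrep : ∀ n : ℕ, ∃ (m : ℕ) (z : ℕ → ℝ) (nxt : ℝ → ℝ),
      z 0 = 0 ∧ z m = 1 ∧ (∀ i < m, z i < z (i + 1)) ∧
      (∀ r, r ≤ 1 →
        (r ≤ nxt r ∧ nxt r ∈ Icc (0:ℝ) 1 ∧ (∀ w ∈ P n, r ≤ w → nxt r ≤ w) ∧
          (r ∈ P n → nxt r = r) ∧
          f (nxt r) = f 1 - ∑ i ∈ Finset.range m,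
            (f (z (i + 1)) - f (z i)) * (if r ≤ z i then 1 else 0))) :=
    fun n => step_rep f (P n) (hP0 n) (hP1 n) (hPsub n)
  choose m z nxt hz0 hzm hzstrict hmain using hrep
  -- convergence of nxt to the identity on [0,1]
  have hnxt_tendsto : ∀ a ∈ Icc (0:ℝ) 1, Tendsto (fun n => f (nxt n a)) atTop (nhds (f a)) := by
    intro a ha
    by_cases haC : a ∈ C
    · -- eventually exact
      obtain ⟨k, hk⟩ : ∃ k, e k = a := by
        have : a ∈ range e := he ▸ haC
        exact this
      have hev : ∀ n, k < n → f (nxt n a) = f a := by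
        intro n hn
        have haP : a ∈ P n := Finset.mem_union_right _
          (Finset.mem_image.mpr ⟨k, Finset.mem_range.mpr hn, hk⟩)
        rw [(hmain n a ha.2).2.2.2.1 haP]
      refine tendsto_atTop_of_eventually_const (i₀ := k + 1) fun n hn => hev n (by omega)
    · -- continuity point of Vf
      have hcont : ContinuousAt (Vf f) a := by
        by_contra hcon
        exact haC (mem_insert_of_mem _ ⟨hcon, ha⟩)
      have hmem : ∀ n, nxt n a ∈ Icc a 1 :=
        fun n => ⟨(hmain n a ha.2).1, ((hmain n a ha.2).2.1).2⟩
      have htend : Tendsto (fun n => nxt n a) atTop (nhds a) := by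
        have hub' : ∀ n, nxt n a ≤ a + 1 / 2 ^ n := by
          intro n
          obtain ⟨w, hwP, haw, hwb⟩ := hgrid n a ha
          exact ((hmain n a ha.2).2.2.1 w hwP haw).trans hwb
        have h1 : Tendsto (fun n : ℕ => a + 1 / 2 ^ n) atTop (nhds a) := by
          have : Tendsto (fun n : ℕ => (1:ℝ) / 2 ^ n) atTop (nhds 0) := by
            simpa [one_div, Function.comp_def] using
              tendsto_inv_atTop_zero.comp (tendsto_pow_atTop_atTop_of_one_lt
                (by norm_num : (1:ℝ) < 2))
          simpa using tendsto_const_nhds.add this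
        exact tendsto_of_tendsto_of_tendsto_of_le_of_le tendsto_const_nhds h1
          (fun n => (hmem n).1) hub'
      exact f_right_lim hV2 ha hcont hmem htend
  -- integrals
  have hIind : ∀ w : ℝ, MeasureTheory.Integrable (fun ω => u ω * (if q ω ≤ w then 1 else 0)) μ := by
    intro w
    have hm : Measurable fun ω => u ω * (if q ω ≤ w then 1 else 0) :=
      hu.mul (Measurable.ite (measurableSet_le hq measurable_const)
        measurable_const measurable_const)
    refine ⟨hm.aestronglyMeasurable, MeasureTheory.HasFiniteIntegral.of_bounded
      (C := 1) (Filter.Eventually.of_forall fun ω => ?_)⟩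
    rw [Real.norm_eq_abs, abs_mul]
    rcases le_or_gt (q ω) w with h | h
    · rw [if_pos h]
      simpa using hub ω
    · rw [if_neg (not_le.mpr h)]
      simp
  -- the approximating sequence
  set g : ℕ → Ω → ℝ := fun n ω =>
    f 1 * (u ω * (if q ω ≤ 1 then 1 else 0)) - ∑ i ∈ Finset.range (m n),
      (f (z n (i + 1)) - f (z n i)) * (u ω * (if q ω ≤ z n i then 1 else 0)) with hg
  have hg_eq : ∀ n ω, g n ω = u ω * f (nxt n (q ω)) := by
    intro n ω
    have h1 := (hmain n (q ω) (hqr ω).2).2.2.2.2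
    rw [hg]
    simp only []
    rw [h1, if_pos (hqr ω).2, mul_sub, Finset.mul_sum]
    rw [mul_one, mul_comm (u ω) (f 1)]
    congr 1
    refine Finset.sum_congr rfl fun i _ => by ring
  have hgi : ∀ n, MeasureTheory.Integrable (g n) μ := by
    intro n
    refine MeasureTheory.Integrable.sub ((hIind 1).const_mul (f 1))
      (MeasureTheory.integrable_finset_sum _ fun i _ => (hIind (z n i)).const_mul _)
  have hvar : ∀ n, ∑ i ∈ Finset.range (m n), |f (z n (i + 1)) - f (z n i)| ≤ 2 :=
    fun n => hV2 _ ⟨m n, z n, hz0 n, hzm n, hzstrict n, rfl⟩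
  have hzmemI : ∀ n i, i ≤ m n → z n i ∈ Icc (0:ℝ) 1 := by
    intro n i hi
    have h0 := (hz0 n) ▸ zmono_of_strict (hzstrict n) 0 i (Nat.zero_le i) hi
    have h1 := (hzm n) ▸ zmono_of_strict (hzstrict n) i (m n) hi le_rfl
    exact ⟨h0, h1⟩
  -- bound on each integral
  have hint_bound : ∀ n, |∫ ω, g n ω ∂μ| ≤ 4 * c := by
    intro n
    have hval : ∫ ω, g n ω ∂μ =
        f 1 * (∫ ω, u ω * (if q ω ≤ 1 then 1 else 0) ∂μ) - ∑ i ∈ Finset.range (m n),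
          (f (z n (i + 1)) - f (z n i)) * (∫ ω, u ω * (if q ω ≤ z n i then 1 else 0) ∂μ) := by
      rw [hg]
      rw [MeasureTheory.integral_sub ((hIind 1).const_mul (f 1))
        (MeasureTheory.integrable_finset_sum _ fun i _ => (hIind (z n i)).const_mul _)]
      rw [integral_const_mul, MeasureTheory.integral_finset_sum _
        fun i _ => (hIind (z n i)).const_mul _]
      congr 1
      exact Finset.sum_congr rfl fun i _ => integral_const_mul _ _
    rw [hval]
    have hb1 : |f 1| ≤ 2 := hfb 1 ⟨zero_le_one, le_rfl⟩
    have hT1 : |∫ ω, u ω * (if q ω ≤ 1 then 1 else 0) ∂μ| ≤ c := hT 1 ⟨zero_le_one, le_rfl⟩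
    have hsum : |∑ i ∈ Finset.range (m n),
        (f (z n (i + 1)) - f (z n i)) * (∫ ω, u ω * (if q ω ≤ z n i then 1 else 0) ∂μ)| ≤
        2 * c := by
      calc |∑ i ∈ Finset.range (m n),
            (f (z n (i + 1)) - f (z n i)) * (∫ ω, u ω * (if q ω ≤ z n i then 1 else 0) ∂μ)|
          ≤ ∑ i ∈ Finset.range (m n),
            |(f (z n (i + 1)) - f (z n i)) * (∫ ω, u ω * (if q ω ≤ z n i then 1 else 0) ∂μ)| :=
            Finset.abs_sum_le_sum_abs _ _
        _ ≤ ∑ i ∈ Finset.range (m n), |f (z n (i + 1)) - f (z n i)| * c := by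
            refine Finset.sum_le_sum fun i hi => ?_
            rw [abs_mul]
            exact mul_le_mul_of_nonneg_left
              (hT _ (hzmemI n i (Finset.mem_range.mp hi).le)) (abs_nonneg _)
        _ = (∑ i ∈ Finset.range (m n), |f (z n (i + 1)) - f (z n i)|) * c := by
            rw [Finset.sum_mul]
        _ ≤ 2 * c := mul_le_mul_of_nonneg_right (hvar n) hc
    calc |f 1 * (∫ ω, u ω * (if q ω ≤ 1 then 1 else 0) ∂μ) - ∑ i ∈ Finset.range (m n),
          (f (z n (i + 1)) - f (z n i)) * (∫ ω, u ω * (if q ω ≤ z n i then 1 else 0) ∂μ)|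
        ≤ |f 1 * (∫ ω, u ω * (if q ω ≤ 1 then 1 else 0) ∂μ)| + |∑ i ∈ Finset.range (m n),
          (f (z n (i + 1)) - f (z n i)) * (∫ ω, u ω * (if q ω ≤ z n i then 1 else 0) ∂μ)| :=
          abs_sub _ _
      _ ≤ 2 * c + 2 * c := by
          refine add_le_add ?_ hsum
          rw [abs_mul]
          exact mul_le_mul hb1 hT1 (abs_nonneg _) (by norm_num)
      _ = 4 * c := by ring
  -- dominated convergence
  have hdct : Tendsto (fun n => ∫ ω, g n ω ∂μ) atTop (nhds (∫ ω, u ω * f (q ω) ∂μ)) := by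
    refine MeasureTheory.tendsto_integral_of_dominated_convergence (bound := fun _ => 2)
      (fun n => (hgi n).1) (MeasureTheory.integrable_const 2)
      (fun n => Filter.Eventually.of_forall fun ω => ?_)
      (Filter.Eventually.of_forall fun ω => ?_)
    · rw [hg_eq n ω, Real.norm_eq_abs, abs_mul]
      have h1 : |f (nxt n (q ω))| ≤ 2 := hfb _ ((hmain n (q ω) (hqr ω).2).2.1)
      refine le_trans (mul_le_mul (hub ω) h1 (abs_nonneg _) zero_le_one) ?_
      norm_num
    · have : (fun n => g n ω) = fun n => u ω * f (nxt n (q ω)) := funext fun n => hg_eq n ω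
      rw [this]
      exact (hnxt_tendsto (q ω) (hqr ω)).const_mul (u ω)
  have habs : Tendsto (fun n => |∫ ω, g n ω ∂μ|) atTop (nhds (|∫ ω, u ω * f (q ω) ∂μ|)) :=
    hdct.abs
  exact le_of_tendsto habs (Filter.Eventually.of_forall hint_bound)


/-- Real value of a Boolean label. -/
def lab (y : Bool) : ℝ := if y then 1 else 0

/-- Conditional expectation of `f` under `D`, given that the group membership
function `g` evaluates to `true` on the context. -/
def condE {X : Type*} [MeasurableSpace X] (D : Measure (X × Bool)) (g : X → Bool)
    (f : X × Bool → ℝ) : ℝ :=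
  ∫ z, f z ∂(D[|{z : X × Bool | g z.1 = true}])

/-- Probability of group `g` under `D`. -/
def Pg {X : Type*} [MeasurableSpace X] (D : Measure (X × Bool)) (g : X → Bool) : ℝ :=
  (D {z : X × Bool | g z.1 = true}).toReal

/-- The set of all partition sums `∑ |f(z_{j+1}) - f(z_j)|` over finite partitions
`0 = z_0 < z_1 < ⋯ < z_m = 1` of `[0,1]`.  `V(f) ≤ C` iff every element is `≤ C`. -/
def partitionSums (f : ℝ → ℝ) : Set ℝ :=
  {S | ∃ (m : ℕ) (z : ℕ → ℝ), z 0 = 0 ∧ z m = 1 ∧ (∀ i < m, z i < z (i + 1)) ∧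
      S = ∑ i ∈ Finset.range m, |f (z (i + 1)) - f (z i)|}

/-- **Hypothesis OI.** If `p⋆` is `(G, H, ε)`-multiaccurate, then for every
`h ∈ H` and group `g ∈ G`, `|E[(y - p⋆(x))·Δℓ(h(x)) | g(x)=1]| ≤ 10ε·√(1/P_g)`. -/
theorem stmt4 {X : Type*} [MeasurableSpace X]
    (D : Measure (X × Bool)) [IsProbabilityMeasure D]
    (ε : ℝ) (hε : 0 < ε)
    -- a bounded-variation loss
    (ℓ : ℝ → Bool → ℝ)
    (hLmeas : ∀ y : Bool, Measurable (fun q => ℓ q y))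
    (hLbdd : ∀ q ∈ Icc (0:ℝ) 1, ∀ y : Bool, ℓ q y ∈ Icc (-1:ℝ) 1)
    (hLBV : ∀ y : Bool, ∀ S ∈ partitionSums (fun q => ℓ q y), S ≤ 1)
    (G : Set (X → Bool)) (hGmeas : ∀ g ∈ G, Measurable g)
    (hGpos : ∀ g ∈ G, 0 < Pg D g)
    (H : Set (X → ℝ)) (hHmeas : ∀ h ∈ H, Measurable h)
    (hHrange : ∀ h ∈ H, ∀ x, h x ∈ Icc (0:ℝ) 1)
    (p : X → ℝ) (hpmeas : Measurable p) (hprange : ∀ x, p x ∈ Icc (0:ℝ) 1)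
    -- (G, H, ε)-multiaccuracy
    (hma : ∀ w ∈ Icc (0:ℝ) 1, ∀ h ∈ H, ∀ g ∈ G,
      |condE D g (fun z => (lab z.2 - p z.1) * (if h z.1 ≤ w then 1 else 0))| ≤
        ε * Real.sqrt (1 / Pg D g)) :
    ∀ h ∈ H, ∀ g ∈ G,
      |condE D g (fun z => (lab z.2 - p z.1) * (ℓ (h z.1) true - ℓ (h z.1) false))| ≤
        10 * ε * Real.sqrt (1 / Pg D g) := by
  intro h hH g hG
  have hne : D {z : X × Bool | g z.1 = true} ≠ 0 := by
    intro h0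
    have h1 := hGpos g hG
    rw [Pg, h0] at h1
    simp at h1
  haveI : IsProbabilityMeasure (D[|{z : X × Bool | g z.1 = true}]) :=
    cond_isProbabilityMeasure hne
  set c : ℝ := ε * Real.sqrt (1 / Pg D g) with hcdef
  have hc : 0 ≤ c := mul_nonneg hε.le (Real.sqrt_nonneg _)
  have hfm : Measurable (fun r => ℓ r true - ℓ r false) := (hLmeas true).sub (hLmeas false)
  have hfb : ∀ r ∈ Icc (0:ℝ) 1, |ℓ r true - ℓ r false| ≤ 2 := by
    intro r hr
    have h1 := hLbdd r hr true
    have h2 := hLbdd r hr false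
    rw [abs_le]
    constructor <;> [linarith [h1.1, h2.2]; linarith [h1.2, h2.1]]
  have hV2 : ∀ S ∈ PS (fun r => ℓ r true - ℓ r false) 1, S ≤ 2 := by
    rintro S ⟨mm, zz, h0, hm1, hs, rfl⟩
    have ht := hLBV true _ ⟨mm, zz, h0, hm1, hs, rfl⟩
    have hf := hLBV false _ ⟨mm, zz, h0, hm1, hs, rfl⟩
    calc ∑ i ∈ Finset.range mm,
          |(fun r => ℓ r true - ℓ r false) (zz (i + 1)) - (fun r => ℓ r true - ℓ r false) (zz i)|
        ≤ ∑ i ∈ Finset.range mm,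
          (|ℓ (zz (i + 1)) true - ℓ (zz i) true| + |ℓ (zz (i + 1)) false - ℓ (zz i) false|) := by
          refine Finset.sum_le_sum fun i _ => ?_
          have heq : (fun r => ℓ r true - ℓ r false) (zz (i + 1)) -
              (fun r => ℓ r true - ℓ r false) (zz i) =
              (ℓ (zz (i + 1)) true - ℓ (zz i) true) - (ℓ (zz (i + 1)) false - ℓ (zz i) false) := by
            simp only []
            ring
          rw [heq]
          exact abs_sub _ _
      _ = (∑ i ∈ Finset.range mm, |ℓ (zz (i + 1)) true - ℓ (zz i) true|) +
          ∑ i ∈ Finset.range mm, |ℓ (zz (i + 1)) false - ℓ (zz i) false| :=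
          Finset.sum_add_distrib
      _ ≤ 1 + 1 := add_le_add ht hf
      _ = 2 := by norm_num
  have hu : Measurable (fun z : X × Bool => lab z.2 - p z.1) :=
    ((measurable_from_top (f := lab)).comp measurable_snd).sub (hpmeas.comp measurable_fst)
  have hub : ∀ z : X × Bool, |lab z.2 - p z.1| ≤ 1 := by
    intro z
    have hp := hprange z.1
    have hl : lab z.2 ∈ Icc (0:ℝ) 1 := by
      rcases Bool.dichotomy z.2 with hb | hb <;> rw [hb] <;> simp [lab]
    rw [abs_le]
    constructor <;> linarith [hp.1, hp.2, hl.1, hl.2]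
  have hqm : Measurable (fun z : X × Bool => h z.1) := (hHmeas h hH).comp measurable_fst
  have hT : ∀ w ∈ Icc (0:ℝ) 1,
      |∫ z, (lab z.2 - p z.1) * (if h z.1 ≤ w then 1 else 0)
        ∂(D[|{z : X × Bool | g z.1 = true}])| ≤ c := by
    intro w hw
    exact hma w hw h hH g hG
  have key := key_lemma (D[|{z : X × Bool | g z.1 = true}])
    (fun r => ℓ r true - ℓ r false) hfm hfb hV2
    (fun z => lab z.2 - p z.1) hu hub
    (fun z => h z.1) hqm (fun z => hHrange h hH z.1) c hc hT
  have hgoal : condE D g (fun z => (lab z.2 - p z.1) * (ℓ (h z.1) true - ℓ (h z.1) false)) =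
      ∫ z, (lab z.2 - p z.1) * (fun r => ℓ r true - ℓ r false) (h z.1)
        ∂(D[|{z : X × Bool | g z.1 = true}]) := rfl
  rw [hgoal]
  refine le_trans key ?_
  have : (10:ℝ) * ε * Real.sqrt (1 / Pg D g) = 10 * c := by rw [hcdef]; ring
  rw [this]
  linarith

end
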